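/- Under the perturbed preconditioned Cholesky-QR model, if κ(A₁)²γ₂ < 1 where γ₂ ≡ 2ε_F + ε_F² + (1+ε_F)²(ε₁ + (1+ε₁)ε₂) and ε_F ≡ (ε_A + ε_s)κ(R_s), then Ĝ₁ + E₂ is symmetric positive definite. -/

import Mathlib

open Matrix

/-- Spectral (two-)norm of a real matrix. -/
noncomputable def spec {m n : ℕ} (M : Matrix (Fin m) (Fin n) ℝ) : ℝ :=
  ‖LinearMap.toContinuousLinearMap (Matrix.toEuclideanLin M)‖

/-- Singular values of a real `m × n` matrix, in decreasing order:
`singularValues M i` is `σ_{i+1}(M)` (0-based). -/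
noncomputable def singularValues {m n : ℕ} (M : Matrix (Fin m) (Fin n) ℝ) : Fin n → ℝ :=
  fun i =>
    Real.sqrt (((Matrix.conjTranspose_eq_transpose_of_trivial M ▸ Matrix.isHermitian_conjTranspose_mul_self M : (Mᵀ * M).IsHermitian).eigenvalues ∘
      ⇑(Tuple.sort (Matrix.conjTranspose_eq_transpose_of_trivial M ▸ Matrix.isHermitian_conjTranspose_mul_self M : (Mᵀ * M).IsHermitian).eigenvalues)) i.rev)

/-- Two-norm condition number `κ(M) = σ₁(M)/σₙ(M)`. -/
noncomputable def kappa {m n : ℕ} (M : Matrix (Fin m) (Fin n) ℝ) : ℝ :=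
  if h : 0 < n then
    singularValues M ⟨0, h⟩ / singularValues M ⟨n - 1, Nat.sub_lt h Nat.one_pos⟩
  else 1

/-- Smallest singular value `σₙ(M)`. -/
noncomputable def sigmaMin {m n : ℕ} (M : Matrix (Fin m) (Fin n) ℝ) : ℝ :=
  if h : 0 < n then singularValues M ⟨n - 1, Nat.sub_lt h Nat.one_pos⟩ else 1

/-- Eigenvalues of a real symmetric matrix in decreasing order:
`symmEigs M j` is `λ_{j+1}(M)` (0-based). -/
noncomputable def symmEigs {n : ℕ} (M : Matrix (Fin n) (Fin n) ℝ) : Fin n → ℝ :=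
  fun j =>
    if h : M.IsHermitian then (h.eigenvalues ∘ ⇑(Tuple.sort h.eigenvalues)) j.rev else 0

section Aux

open scoped Matrix.Norms.L2Operator

lemma Matrix.isHermitian_transpose_mul_self {m n : ℕ} (M : Matrix (Fin m) (Fin n) ℝ) :
    (Mᵀ * M).IsHermitian :=
  (Matrix.conjTranspose_eq_transpose_of_trivial M ▸ Matrix.isHermitian_conjTranspose_mul_self M :
    (Mᵀ * M).IsHermitian)

lemma spec_eq_norm {m n : ℕ} (M : Matrix (Fin m) (Fin n) ℝ) : spec M = ‖M‖ := rfl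

lemma dot_mulVec_le {n : ℕ} (H : Matrix (Fin n) (Fin n) ℝ) (x : Fin n → ℝ) :
    x ⬝ᵥ (H *ᵥ x) ≤ ‖H‖ * (x ⬝ᵥ x) := by
  set x' : EuclideanSpace ℝ (Fin n) := (WithLp.equiv 2 (Fin n → ℝ)).symm x with hx'
  have h1 : x ⬝ᵥ (H *ᵥ x) = inner ℝ x' (toEuclideanLin H x') := by
    rw [EuclideanSpace.inner_eq_star_dotProduct, dotProduct_comm]; rfl
  have h2 : ‖toEuclideanLin H x'‖ ≤ ‖H‖ * ‖x'‖ :=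
    (toEuclideanLin (n := Fin n) (m := Fin n) (𝕜 := ℝ) |>.trans
      LinearMap.toContinuousLinearMap H).le_opNorm x'
  have h3 : ‖x'‖ ^ 2 = x ⬝ᵥ x := by
    rw [← real_inner_self_eq_norm_sq, EuclideanSpace.inner_eq_star_dotProduct]
    simp [dotProduct]
    rfl
  calc x ⬝ᵥ (H *ᵥ x) = inner ℝ x' (toEuclideanLin H x') := h1
    _ ≤ ‖x'‖ * ‖toEuclideanLin H x'‖ := real_inner_le_norm _ _
    _ ≤ ‖x'‖ * (‖H‖ * ‖x'‖) := mul_le_mul_of_nonneg_left h2 (norm_nonneg _)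
    _ = ‖H‖ * (x ⬝ᵥ x) := by rw [← h3]; ring

lemma smul_one_eq_diag {n : ℕ} (c : ℝ) :
    (c • (1 : Matrix (Fin n) (Fin n) ℝ)) = diagonal (fun _ => c) := by
  ext i j; by_cases h : i = j <;> simp [Matrix.one_apply, h]

lemma conj_diag_posSemidef {n : ℕ} {H : Matrix (Fin n) (Fin n) ℝ} (hH : H.IsHermitian)
    {c : ℝ} (hc : ∀ i, c ≤ hH.eigenvalues i) :
    (H - c • 1).PosSemidef := by
  have hU : (hH.eigenvectorUnitary : Matrix (Fin n) (Fin n) ℝ) *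
      star (hH.eigenvectorUnitary : Matrix (Fin n) (Fin n) ℝ) = 1 :=
    Unitary.mul_star_self_of_mem (hH.eigenvectorUnitary).2
  have key : H - c • 1 =
      (hH.eigenvectorUnitary : Matrix (Fin n) (Fin n) ℝ) *
        (diagonal (fun i => hH.eigenvalues i - c)) *
        (hH.eigenvectorUnitary : Matrix (Fin n) (Fin n) ℝ)ᴴ := by
    have hst := hH.spectral_theorem
    simp only [Unitary.conjStarAlgAut_apply, Unitary.coe_star] at hst
    rw [← star_eq_conjTranspose]
    have : diagonal (fun i => hH.eigenvalues i - c) =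
        diagonal (RCLike.ofReal ∘ hH.eigenvalues) - c • (1 : Matrix (Fin n) (Fin n) ℝ) := by
      rw [smul_one_eq_diag, ← diagonal_sub]; rfl
    rw [this, Matrix.mul_sub, Matrix.sub_mul, ← hst]
    congr 1
    rw [Matrix.mul_smul, Matrix.smul_mul, Matrix.mul_one, hU]
  rw [key]
  exact (Matrix.posSemidef_diagonal_iff.mpr
    (fun i => by simpa using hc i)).mul_mul_conjTranspose_same _

lemma rayleigh_lower {n : ℕ} {H : Matrix (Fin n) (Fin n) ℝ} (hH : H.IsHermitian)
    {c : ℝ} (hc : ∀ i, c ≤ hH.eigenvalues i) (x : Fin n → ℝ) :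
    c * (x ⬝ᵥ x) ≤ x ⬝ᵥ (H *ᵥ x) := by
  have := (conj_diag_posSemidef hH hc).dotProduct_mulVec_nonneg x
  simp only [star_trivial, sub_mulVec, dotProduct_sub, smul_mulVec, one_mulVec,
    dotProduct_smul, smul_eq_mul] at this
  linarith

lemma conj_diag_posSemidef' {n : ℕ} {H : Matrix (Fin n) (Fin n) ℝ} (hH : H.IsHermitian)
    {c : ℝ} (hc : ∀ i, hH.eigenvalues i ≤ c) :
    (c • 1 - H).PosSemidef := by
  have hU : (hH.eigenvectorUnitary : Matrix (Fin n) (Fin n) ℝ) *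
      star (hH.eigenvectorUnitary : Matrix (Fin n) (Fin n) ℝ) = 1 :=
    Unitary.mul_star_self_of_mem (hH.eigenvectorUnitary).2
  have key : c • 1 - H =
      (hH.eigenvectorUnitary : Matrix (Fin n) (Fin n) ℝ) *
        (diagonal (fun i => c - hH.eigenvalues i)) *
        (hH.eigenvectorUnitary : Matrix (Fin n) (Fin n) ℝ)ᴴ := by
    have hst := hH.spectral_theorem
    simp only [Unitary.conjStarAlgAut_apply, Unitary.coe_star] at hst
    rw [← star_eq_conjTranspose]
    have : diagonal (fun i => c - hH.eigenvalues i) =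
        c • (1 : Matrix (Fin n) (Fin n) ℝ) - diagonal (RCLike.ofReal ∘ hH.eigenvalues) := by
      rw [smul_one_eq_diag, ← diagonal_sub]; rfl
    rw [this, Matrix.mul_sub, Matrix.sub_mul, ← hst]
    congr 1
    rw [Matrix.mul_smul, Matrix.smul_mul, Matrix.mul_one, hU]
  rw [key]
  exact (Matrix.posSemidef_diagonal_iff.mpr
    (fun i => by simpa using hc i)).mul_mul_conjTranspose_same _

lemma rayleigh_upper {n : ℕ} {H : Matrix (Fin n) (Fin n) ℝ} (hH : H.IsHermitian)
    {c : ℝ} (hc : ∀ i, hH.eigenvalues i ≤ c) (x : Fin n → ℝ) :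
    x ⬝ᵥ (H *ᵥ x) ≤ c * (x ⬝ᵥ x) := by
  have := (conj_diag_posSemidef' hH hc).dotProduct_mulVec_nonneg x
  simp only [star_trivial, sub_mulVec, dotProduct_sub, smul_mulVec, one_mulVec,
    dotProduct_smul, smul_eq_mul] at this
  linarith

lemma sorted_min_le {n : ℕ} (f : Fin n → ℝ) (hn : 0 < n) (i : Fin n) :
    (f ∘ Tuple.sort f) ⟨0, hn⟩ ≤ f i := by
  have h1 : f i = (f ∘ Tuple.sort f) ((Tuple.sort f).symm i) := by simp
  rw [h1]
  exact Tuple.monotone_sort f (Fin.mk_le_mk.mpr (Nat.zero_le _))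

lemma le_sorted_max {n : ℕ} (f : Fin n → ℝ) (hn : 0 < n) (i : Fin n) :
    f i ≤ (f ∘ Tuple.sort f) ⟨n - 1, Nat.sub_lt hn Nat.one_pos⟩ := by
  have h1 : f i = (f ∘ Tuple.sort f) ((Tuple.sort f).symm i) := by simp
  rw [h1]
  exact Tuple.monotone_sort f
    (Fin.mk_le_mk.mpr (Nat.le_sub_one_of_lt (((Tuple.sort f).symm i)).2))

lemma mulVec_inj_of_rank {m n : ℕ} {M : Matrix (Fin m) (Fin n) ℝ} (h : M.rank = n) :
    ∀ x : Fin n → ℝ, M *ᵥ x = 0 → x = 0 := by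
  intro x hx
  have hker : LinearMap.ker M.mulVecLin = ⊥ := by
    have h1 := LinearMap.finrank_range_add_finrank_ker M.mulVecLin
    rw [show Module.finrank ℝ (LinearMap.range M.mulVecLin) = n from h, Module.finrank_pi,
      Fintype.card_fin] at h1
    exact Submodule.finrank_eq_zero.mp (by omega)
  exact LinearMap.ker_eq_bot.mp hker (by simpa using hx)

lemma posDef_transpose_mul_self {m n : ℕ} {M : Matrix (Fin m) (Fin n) ℝ} (h : M.rank = n) :
    (Mᵀ * M).PosDef := by
  refine .of_dotProduct_mulVec_pos (isHermitian_transpose_mul_self M) fun x hx => ?_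
  have h1 : star x ⬝ᵥ ((Mᵀ * M) *ᵥ x) = (M *ᵥ x) ⬝ᵥ (M *ᵥ x) := by
    rw [star_trivial, ← mulVec_mulVec, dotProduct_mulVec, vecMul_transpose]
  rw [h1]
  have h2 : M *ᵥ x ≠ 0 := fun hMx => hx (mulVec_inj_of_rank h x hMx)
  have h3 : 0 ≤ (M *ᵥ x) ⬝ᵥ (M *ᵥ x) := Finset.sum_nonneg fun i _ => mul_self_nonneg _
  rcases h3.lt_or_eq with h4 | h4
  · exact h4
  · exfalso; apply h2; ext i
    have h5 := Finset.sum_eq_zero_iff_of_nonneg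
      (fun i (_ : i ∈ Finset.univ) => mul_self_nonneg ((M *ᵥ x) i)) |>.mp h4.symm
    simpa [mul_self_eq_zero] using h5 i (Finset.mem_univ i)

lemma opNorm_le_sqrt {m n : ℕ} (M : Matrix (Fin m) (Fin n) ℝ) {c : ℝ} (hc : 0 ≤ c)
    (h : ∀ x : Fin n → ℝ, x ⬝ᵥ ((Mᵀ * M) *ᵥ x) ≤ c * (x ⬝ᵥ x)) :
    ‖M‖ ≤ Real.sqrt c := by
  rw [Matrix.l2_opNorm_def]
  refine ContinuousLinearMap.opNorm_le_bound _ (Real.sqrt_nonneg c) fun x' => ?_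
  set T := (toEuclideanLin (m := Fin m) (n := Fin n) (𝕜 := ℝ)).trans
    LinearMap.toContinuousLinearMap M with hT
  set x : Fin n → ℝ := WithLp.equiv 2 (Fin n → ℝ) x' with hxdef
  have key : ‖T x'‖ ^ 2 ≤ (Real.sqrt c * ‖x'‖) ^ 2 := by
    have h1 : T x' = (WithLp.equiv 2 (Fin m → ℝ)).symm (M *ᵥ x) := rfl
    have h2 : ‖(WithLp.equiv 2 (Fin m → ℝ)).symm (M *ᵥ x)‖ ^ 2 = (M *ᵥ x) ⬝ᵥ (M *ᵥ x) := by
      rw [← real_inner_self_eq_norm_sq, EuclideanSpace.inner_eq_star_dotProduct]; simp [dotProduct]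
    have h3 : ‖x'‖ ^ 2 = x ⬝ᵥ x := by
      rw [← real_inner_self_eq_norm_sq,
        show x' = (WithLp.equiv 2 (Fin n → ℝ)).symm x from rfl,
        EuclideanSpace.inner_eq_star_dotProduct]
      simp [dotProduct]
    have h4 : x ⬝ᵥ ((Mᵀ * M) *ᵥ x) = (M *ᵥ x) ⬝ᵥ (M *ᵥ x) := by
      rw [← mulVec_mulVec, dotProduct_mulVec, vecMul_transpose]
    rw [h1, h2, ← h4, mul_pow, Real.sq_sqrt hc, h3]
    exact h x
  have := Real.sqrt_le_sqrt key
  rwa [Real.sqrt_sq (norm_nonneg _),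
    Real.sqrt_sq (mul_nonneg (Real.sqrt_nonneg c) (norm_nonneg _))] at this

lemma dot_self_pos {n : ℕ} {x : Fin n → ℝ} (hx : x ≠ 0) : 0 < x ⬝ᵥ x := by
  obtain ⟨i, hi⟩ := Function.ne_iff.mp hx
  refine Finset.sum_pos' (fun j _ => mul_self_nonneg _) ⟨i, Finset.mem_univ i, ?_⟩
  have : x i ≠ 0 := by simpa using hi
  exact mul_self_pos.mpr this

end Aux

section MainProof

open scoped Matrix.Norms.L2Operator

set_option maxHeartbeats 8000000 in
/-- Theorem 3.2, positive definiteness: if `κ(A₁)²γ₂ < 1` then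
`Ĝ₁ + E₂` is symmetric positive definite. -/
theorem stmt_11 {m n : ℕ} (A E Es : Matrix (Fin m) (Fin n) ℝ)
    (Rs : Matrix (Fin n) (Fin n) ℝ)
    (hA : A.rank = n) (hRs : IsUnit Rs.det)
    (A₁ Ahat : Matrix (Fin m) (Fin n) ℝ)
    (hA₁ : A₁ = A * Rs⁻¹)
    (hAhat : Ahat = ((A + E) + Es) * Rs⁻¹)
    (E₁ E₂ Ghat : Matrix (Fin n) (Fin n) ℝ)
    (hE₁ : E₁ᵀ = E₁) (hE₂ : E₂ᵀ = E₂)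
    (hGhat : Ghat = Ahatᵀ * Ahat + E₁)
    (εA εs εF ε₁ ε₂ γ₂ : ℝ)
    (hεA : εA = spec E / spec A)
    (hεs : εs = spec Es / (spec A₁ * spec Rs))
    (hεF : εF = (εA + εs) * (spec Rs * spec Rs⁻¹))
    (hε₁ : ε₁ = spec E₁ / spec Ahat ^ 2)
    (hε₂ : ε₂ = spec E₂ / spec Ghat)
    (hγ₂ : γ₂ = 2 * εF + εF ^ 2 + (1 + εF) ^ 2 * (ε₁ + (1 + ε₁) * ε₂))
    (hsmall : kappa A₁ ^ 2 * γ₂ < 1) :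
    (Ghat + E₂).PosDef := by
  -- trivial case n = 0
  rcases Nat.eq_zero_or_pos n with hn0 | hn
  · subst hn0
    refine ⟨?_, fun x hx => absurd (Subsingleton.elim x 0) hx⟩
    ext i j; exact absurd i.2 (by omega)
  -- transpose = conjTranspose over ℝ
  have ct : ∀ {k l : ℕ} (M : Matrix (Fin k) (Fin l) ℝ), Mᴴ = Mᵀ := fun M =>
    Matrix.conjTranspose_eq_transpose_of_trivial M
  -- basic ranks
  have hrankA₁ : A₁.rank = n := by
    rw [hA₁]; rw [Matrix.rank_mul_eq_left_of_isUnit_det Rs⁻¹ A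
      (Matrix.isUnit_nonsing_inv_det Rs hRs)]; exact hA
  -- eigen data of A₁ᵀ A₁
  have hpd : (A₁ᵀ * A₁).PosDef := posDef_transpose_mul_self hrankA₁
  set g : Fin n → ℝ := (Matrix.isHermitian_transpose_mul_self A₁).eigenvalues ∘
    ⇑(Tuple.sort (Matrix.isHermitian_transpose_mul_self A₁).eigenvalues) with hg
  set lmin : ℝ := g ⟨0, hn⟩ with hlmin
  set lmax : ℝ := g ⟨n - 1, Nat.sub_lt hn Nat.one_pos⟩ with hlmax
  have hlminle : ∀ i, lmin ≤ (Matrix.isHermitian_transpose_mul_self A₁).eigenvalues i :=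
    fun i => sorted_min_le _ hn i
  have hlmaxge : ∀ i, (Matrix.isHermitian_transpose_mul_self A₁).eigenvalues i ≤ lmax :=
    fun i => le_sorted_max _ hn i
  have hlminpos : 0 < lmin := by
    rw [hlmin, hg]
    exact hpd.eigenvalues_pos _
  have hminmax : lmin ≤ lmax :=
    hlmaxge ((Tuple.sort (Matrix.isHermitian_transpose_mul_self A₁).eigenvalues) ⟨0, hn⟩)
  have hlmaxpos : 0 < lmax := lt_of_lt_of_le hlminpos hminmax
  -- singular value / kappa identification
  have hrev0 : (Fin.rev (⟨0, hn⟩ : Fin n)) = ⟨n - 1, Nat.sub_lt hn Nat.one_pos⟩ := by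
    ext; simp [Fin.rev]
  have hrevl : (Fin.rev (⟨n - 1, Nat.sub_lt hn Nat.one_pos⟩ : Fin n)) = ⟨0, hn⟩ := by
    ext; simp only [Fin.rev]; omega
  have hsv0 : singularValues A₁ ⟨0, hn⟩ = Real.sqrt lmax := by
    rw [singularValues, hrev0]
  have hsvl : singularValues A₁ ⟨n - 1, Nat.sub_lt hn Nat.one_pos⟩ = Real.sqrt lmin := by
    rw [singularValues, hrevl]
  have hkappa : kappa A₁ = Real.sqrt lmax / Real.sqrt lmin := by
    rw [kappa, dif_pos hn, hsv0, hsvl]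
  have hksq : kappa A₁ ^ 2 = lmax / lmin := by
    rw [hkappa, div_pow, Real.sq_sqrt hlmaxpos.le, Real.sq_sqrt hlminpos.le]
  have hkge1 : 1 ≤ kappa A₁ := by
    rw [hkappa]
    rw [le_div_iff₀ (Real.sqrt_pos.mpr hlminpos)]
    simpa using Real.sqrt_le_sqrt hminmax
  clear_value lmin lmax
  clear_value g
  clear hg hlmin hlmax
  -- spec = norm rewriting
  simp only [spec_eq_norm] at hεA hεs hεF hε₁ hε₂
  -- positivity of base norms
  have hApos : (0:ℝ) < ‖A‖ := by
    rw [norm_pos_iff]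
    intro h0
    rw [h0, Matrix.rank_zero] at hA
    omega
  have hA₁pos : (0:ℝ) < ‖A₁‖ := by
    rw [norm_pos_iff]
    intro h0
    rw [h0, Matrix.rank_zero] at hrankA₁
    omega
  have hRspos : (0:ℝ) < ‖Rs‖ := by
    rw [norm_pos_iff]
    intro h0
    rw [h0, (haveI : Nonempty (Fin n) := ⟨⟨0, hn⟩⟩; Matrix.det_zero)] at hRs
    exact (by simpa using hRs : ¬ IsUnit (0:ℝ)) (by simpa using hRs)
  have hRs'nn : (0:ℝ) ≤ ‖Rs⁻¹‖ := norm_nonneg _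
  -- epsilon nonnegativity
  have hεAnn : 0 ≤ εA := hεA ▸ div_nonneg (norm_nonneg _) (norm_nonneg _)
  have hεsnn : 0 ≤ εs := hεs ▸ div_nonneg (norm_nonneg _)
    (mul_nonneg (norm_nonneg _) (norm_nonneg _))
  have hεFnn : 0 ≤ εF := hεF ▸ mul_nonneg (add_nonneg hεAnn hεsnn)
    (mul_nonneg (norm_nonneg _) (norm_nonneg _))
  have hε₁nn : 0 ≤ ε₁ := hε₁ ▸ div_nonneg (norm_nonneg _) (sq_nonneg _)
  have hε₂nn : 0 ≤ ε₂ := hε₂ ▸ div_nonneg (norm_nonneg _) (norm_nonneg _)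
  have hsum_nn : (0:ℝ) ≤ ε₁ + (1 + ε₁) * ε₂ :=
    add_nonneg hε₁nn (mul_nonneg (by linarith only [hε₁nn]) hε₂nn)
  have hγ₂nn : 0 ≤ γ₂ := by
    rw [hγ₂]
    have h1 : (0:ℝ) ≤ 2 * εF := by linarith only [hεFnn]
    have h2 : (0:ℝ) ≤ (1 + εF) ^ 2 * (ε₁ + (1 + ε₁) * ε₂) :=
      mul_nonneg (sq_nonneg _) hsum_nn
    linarith only [h1, h2, sq_nonneg εF]
  -- norm identities from the epsilon definitions
  have hEnorm : ‖E‖ = εA * ‖A‖ := by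
    rw [hεA, div_mul_cancel₀ _ hApos.ne']
  have hEsnorm : ‖Es‖ = εs * (‖A₁‖ * ‖Rs‖) := by
    rw [hεs, div_mul_cancel₀ _ (mul_pos hA₁pos hRspos).ne']
  -- A = A₁ * Rs
  have hAeq : A = A₁ * Rs := by
    rw [hA₁, Matrix.mul_assoc, Matrix.nonsing_inv_mul Rs hRs, Matrix.mul_one]
  have hAle : ‖A‖ ≤ ‖A₁‖ * ‖Rs‖ := by
    conv_lhs => rw [hAeq]
    exact Matrix.l2_opNorm_mul A₁ Rs
  -- the perturbation D
  set D : Matrix (Fin m) (Fin n) ℝ := Ahat - A₁ with hDdef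
  have hDeq : D = (E + Es) * Rs⁻¹ := by
    rw [hDdef, hAhat, hA₁]
    simp only [Matrix.add_mul]
    abel
  have hDle : ‖D‖ ≤ εF * ‖A₁‖ := by
    have h1 : ‖D‖ ≤ (‖E‖ + ‖Es‖) * ‖Rs⁻¹‖ := by
      rw [hDeq]
      exact le_trans (Matrix.l2_opNorm_mul _ _)
        (mul_le_mul_of_nonneg_right (norm_add_le _ _) hRs'nn)
    have h2 : ‖E‖ ≤ εA * (‖A₁‖ * ‖Rs‖) := by
      rw [hEnorm]
      exact mul_le_mul_of_nonneg_left hAle hεAnn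
    have h3 : ‖E‖ + ‖Es‖ ≤ (εA + εs) * (‖A₁‖ * ‖Rs‖) := by
      have hexp : (εA + εs) * (‖A₁‖ * ‖Rs‖)
          = εA * (‖A₁‖ * ‖Rs‖) + εs * (‖A₁‖ * ‖Rs‖) := by ring
      rw [hexp, hEsnorm]
      linarith
    calc ‖D‖ ≤ (‖E‖ + ‖Es‖) * ‖Rs⁻¹‖ := h1
      _ ≤ ((εA + εs) * (‖A₁‖ * ‖Rs‖)) * ‖Rs⁻¹‖ := mul_le_mul_of_nonneg_right h3 hRs'nn
      _ = εF * ‖A₁‖ := by rw [hεF]; ring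
  have hAhateq : Ahat = A₁ + D := by rw [hDdef]; abel
  have htle : ‖Ahat‖ ≤ (1 + εF) * ‖A₁‖ := by
    have hexp : (1 + εF) * ‖A₁‖ = ‖A₁‖ + εF * ‖A₁‖ := by ring
    calc ‖Ahat‖ ≤ ‖A₁‖ + ‖D‖ := hAhateq ▸ norm_add_le _ _
      _ ≤ (1 + εF) * ‖A₁‖ := by rw [hexp]; linarith only [hDle]
  -- auxiliary facts
  have hksq1 : (1:ℝ) ≤ kappa A₁ ^ 2 := one_le_pow₀ hkge1
  have hgle : γ₂ ≤ kappa A₁ ^ 2 * γ₂ := le_mul_of_one_le_left hγ₂nn hksq1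
  -- ‖Ahat‖ > 0
  have htpos : (0:ℝ) < ‖Ahat‖ := by
    rcases (norm_nonneg Ahat).lt_or_eq with h | h
    · exact h
    · exfalso
      have hAhat0 : Ahat = 0 := norm_eq_zero.mp h.symm
      have hA₁D : A₁ = -D := by rw [hDdef, hAhat0]; abel
      have hnormeq : ‖A₁‖ = ‖D‖ := by rw [hA₁D, norm_neg]
      have h1F : 1 ≤ εF :=
        (le_mul_iff_one_le_left hA₁pos).mp (hnormeq ▸ hDle)
      have hγ₂ge : 2 ≤ γ₂ := by
        rw [hγ₂]
        have h0 : 0 ≤ (1 + εF) ^ 2 * (ε₁ + (1 + ε₁) * ε₂) :=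
          mul_nonneg (sq_nonneg _) hsum_nn
        linarith only [h0, h1F, sq_nonneg εF]
      linarith only [hγ₂ge, hgle, hsmall]
  -- ‖AhatᵀAhat‖ = ‖Ahat‖²
  have hTmul : ‖Ahatᵀ * Ahat‖ = ‖Ahat‖ * ‖Ahat‖ := by
    rw [← ct Ahat]
    exact Matrix.l2_opNorm_conjTranspose_mul_self Ahat
  have hE₁norm : ‖E₁‖ = ε₁ * ‖Ahat‖ ^ 2 := by
    rw [hε₁, div_mul_cancel₀ _ (pow_pos htpos 2).ne']
  -- ‖Ghat‖ > 0
  have hGpos : (0:ℝ) < ‖Ghat‖ := by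
    rcases (norm_nonneg Ghat).lt_or_eq with h | h
    · exact h
    · exfalso
      have hGhat0 : Ghat = 0 := norm_eq_zero.mp h.symm
      have hneg : Ahatᵀ * Ahat = -E₁ := by
        have h0 : Ahatᵀ * Ahat + E₁ = 0 := hGhat ▸ hGhat0
        have h1 := congrArg (fun M => M - E₁) h0
        simpa [add_sub_cancel_right] using h1
      have heq : ‖Ahat‖ * ‖Ahat‖ = ε₁ * ‖Ahat‖ ^ 2 := by
        rw [← hTmul, hneg, norm_neg, hE₁norm]
      have heq2 : 1 * ‖Ahat‖ ^ 2 = ε₁ * ‖Ahat‖ ^ 2 := by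
        rw [← heq]; ring
      have h1ε₁ : (1:ℝ) ≤ ε₁ :=
        (mul_right_cancel₀ (pow_pos htpos 2).ne' heq2).le
      have e1 : (1:ℝ) ≤ ε₁ + (1 + ε₁) * ε₂ := by
        have h0 : 0 ≤ (1 + ε₁) * ε₂ := mul_nonneg (by linarith only [h1ε₁]) hε₂nn
        linarith only [h0, h1ε₁]
      have e2 : (1:ℝ) ≤ (1 + εF) ^ 2 := one_le_pow₀ (le_add_of_nonneg_right hεFnn)
      have e3 : (1:ℝ) * 1 ≤ (1 + εF) ^ 2 * (ε₁ + (1 + ε₁) * ε₂) :=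
        mul_le_mul e2 e1 one_pos.le (sq_nonneg _)
      have hγ₂ge : 1 ≤ γ₂ := by
        rw [hγ₂]
        linarith only [e3, hεFnn, sq_nonneg εF]
      linarith only [hγ₂ge, hgle, hsmall]
  have hE₂norm : ‖E₂‖ = ε₂ * ‖Ghat‖ := by
    rw [hε₂, div_mul_cancel₀ _ hGpos.ne']
  have hGle : ‖Ghat‖ ≤ (1 + ε₁) * ‖Ahat‖ ^ 2 := by
    have hexp : (1 + ε₁) * ‖Ahat‖ ^ 2 = ‖Ahat‖ * ‖Ahat‖ + ε₁ * ‖Ahat‖ ^ 2 := by ring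
    calc ‖Ghat‖ ≤ ‖Ahatᵀ * Ahat‖ + ‖E₁‖ := hGhat ▸ norm_add_le _ _
      _ = ‖Ahat‖ * ‖Ahat‖ + ε₁ * ‖Ahat‖ ^ 2 := by rw [hTmul, hE₁norm]
      _ ≤ (1 + ε₁) * ‖Ahat‖ ^ 2 := by rw [hexp]
  -- decomposition of the error matrix
  have hΔeq : Ghat + E₂ - A₁ᵀ * A₁ = A₁ᵀ * D + Dᵀ * A₁ + Dᵀ * D + E₁ + E₂ := by
    rw [hGhat, hAhateq, transpose_add, Matrix.add_mul, Matrix.mul_add, Matrix.mul_add]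
    abel
  -- transpose norms
  have hTA₁ : ‖A₁ᵀ‖ = ‖A₁‖ := by
    rw [← ct A₁]; exact Matrix.l2_opNorm_conjTranspose A₁
  have hTD : ‖Dᵀ‖ = ‖D‖ := by
    rw [← ct D]; exact Matrix.l2_opNorm_conjTranspose D
  have hDnn : (0:ℝ) ≤ εF * ‖A₁‖ := mul_nonneg hεFnn hA₁pos.le
  have n1 : ‖A₁ᵀ * D‖ ≤ ‖A₁‖ * (εF * ‖A₁‖) :=
    le_trans (Matrix.l2_opNorm_mul _ _)
      (by rw [hTA₁]; exact mul_le_mul_of_nonneg_left hDle (norm_nonneg _))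
  have n2 : ‖Dᵀ * A₁‖ ≤ (εF * ‖A₁‖) * ‖A₁‖ :=
    le_trans (Matrix.l2_opNorm_mul _ _)
      (by rw [hTD]; exact mul_le_mul_of_nonneg_right hDle (norm_nonneg _))
  have n3 : ‖Dᵀ * D‖ ≤ (εF * ‖A₁‖) * (εF * ‖A₁‖) :=
    le_trans (Matrix.l2_opNorm_mul _ _)
      (by rw [hTD]; exact mul_le_mul hDle hDle (norm_nonneg _) hDnn)
  have hAhatsq : ‖Ahat‖ ^ 2 ≤ ((1 + εF) * ‖A₁‖) ^ 2 :=
    pow_le_pow_left₀ (norm_nonneg Ahat) htle 2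
  have n4 : ‖E₁‖ ≤ ε₁ * ((1 + εF) * ‖A₁‖) ^ 2 := by
    rw [hE₁norm]
    exact mul_le_mul_of_nonneg_left hAhatsq hε₁nn
  have n5 : ‖E₂‖ ≤ ε₂ * ((1 + ε₁) * ((1 + εF) * ‖A₁‖) ^ 2) := by
    rw [hE₂norm]
    have h1 : ‖Ghat‖ ≤ (1 + ε₁) * ((1 + εF) * ‖A₁‖) ^ 2 :=
      le_trans hGle (mul_le_mul_of_nonneg_left hAhatsq (by linarith only [hε₁nn]))
    exact mul_le_mul_of_nonneg_left h1 hε₂nn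
  have hΔle : ‖Ghat + E₂ - A₁ᵀ * A₁‖ ≤ γ₂ * ‖A₁‖ ^ 2 := by
    have t1 : ‖Ghat + E₂ - A₁ᵀ * A₁‖ ≤
        ‖A₁ᵀ * D‖ + ‖Dᵀ * A₁‖ + ‖Dᵀ * D‖ + ‖E₁‖ + ‖E₂‖ := by
      rw [hΔeq]
      calc ‖A₁ᵀ * D + Dᵀ * A₁ + Dᵀ * D + E₁ + E₂‖
          ≤ ‖A₁ᵀ * D + Dᵀ * A₁ + Dᵀ * D + E₁‖ + ‖E₂‖ := norm_add_le _ _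
        _ ≤ ‖A₁ᵀ * D + Dᵀ * A₁ + Dᵀ * D‖ + ‖E₁‖ + ‖E₂‖ := by
            linarith only [norm_add_le (A₁ᵀ * D + Dᵀ * A₁ + Dᵀ * D) E₁]
        _ ≤ ‖A₁ᵀ * D + Dᵀ * A₁‖ + ‖Dᵀ * D‖ + ‖E₁‖ + ‖E₂‖ := by
            linarith only [norm_add_le (A₁ᵀ * D + Dᵀ * A₁) (Dᵀ * D)]
        _ ≤ ‖A₁ᵀ * D‖ + ‖Dᵀ * A₁‖ + ‖Dᵀ * D‖ + ‖E₁‖ + ‖E₂‖ := by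
            linarith only [norm_add_le (A₁ᵀ * D) (Dᵀ * A₁)]
    have t2 : γ₂ * ‖A₁‖ ^ 2 = ‖A₁‖ * (εF * ‖A₁‖) + (εF * ‖A₁‖) * ‖A₁‖
        + (εF * ‖A₁‖) * (εF * ‖A₁‖) + ε₁ * ((1 + εF) * ‖A₁‖) ^ 2
        + ε₂ * ((1 + ε₁) * ((1 + εF) * ‖A₁‖) ^ 2) := by
      rw [hγ₂]; ring
    linarith only [t1, t2, n1, n2, n3, n4, n5]
  -- ‖A₁‖² ≤ lmax
  have hA₁sqrt : ‖A₁‖ ≤ Real.sqrt lmax :=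
    opNorm_le_sqrt A₁ hlmaxpos.le
      (fun x => rayleigh_upper (Matrix.isHermitian_transpose_mul_self A₁) hlmaxge x)
  have hA₁sq : ‖A₁‖ ^ 2 ≤ lmax :=
    le_trans (pow_le_pow_left₀ (norm_nonneg _) hA₁sqrt 2) (Real.sq_sqrt hlmaxpos.le).le
  -- final strict bound
  have hlmaxeq : lmax = kappa A₁ ^ 2 * lmin := by
    rw [hksq, div_mul_cancel₀ _ hlminpos.ne']
  have hfinal : ‖Ghat + E₂ - A₁ᵀ * A₁‖ < lmin := by
    have c1 : γ₂ * ‖A₁‖ ^ 2 ≤ γ₂ * lmax := mul_le_mul_of_nonneg_left hA₁sq hγ₂nn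
    have c2 : γ₂ * lmax = kappa A₁ ^ 2 * γ₂ * lmin := by rw [hlmaxeq]; ring
    have c3 : kappa A₁ ^ 2 * γ₂ * lmin < 1 * lmin :=
      mul_lt_mul_of_pos_right hsmall hlminpos
    linarith only [hΔle, c1, c2, c3]
  -- conclude positive definiteness
  refine .of_dotProduct_mulVec_pos ?_ ?_
  · have hts : (Ghat + E₂)ᵀ = Ghat + E₂ := by
      rw [transpose_add, hGhat, transpose_add, transpose_mul, transpose_transpose, hE₁, hE₂]
    exact (ct (Ghat + E₂)).trans hts
  · intro x hx
    rw [star_trivial]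
    have hsplit : Ghat + E₂ = A₁ᵀ * A₁ + (Ghat + E₂ - A₁ᵀ * A₁) := by abel
    rw [hsplit, add_mulVec, dotProduct_add]
    have r1 : lmin * (x ⬝ᵥ x) ≤ x ⬝ᵥ ((A₁ᵀ * A₁) *ᵥ x) :=
      rayleigh_lower (Matrix.isHermitian_transpose_mul_self A₁) hlminle x
    have r2 : -(‖Ghat + E₂ - A₁ᵀ * A₁‖ * (x ⬝ᵥ x)) ≤ x ⬝ᵥ ((Ghat + E₂ - A₁ᵀ * A₁) *ᵥ x) := by
      have h0 := dot_mulVec_le (-(Ghat + E₂ - A₁ᵀ * A₁)) x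
      rw [neg_mulVec, dotProduct_neg, norm_neg] at h0
      linarith only [h0]
    have hxx := dot_self_pos hx
    have hkey : 0 < (lmin - ‖Ghat + E₂ - A₁ᵀ * A₁‖) * (x ⬝ᵥ x) :=
      mul_pos (sub_pos.mpr hfinal) hxx
    have hexp : (lmin - ‖Ghat + E₂ - A₁ᵀ * A₁‖) * (x ⬝ᵥ x)
        = lmin * (x ⬝ᵥ x) - ‖Ghat + E₂ - A₁ᵀ * A₁‖ * (x ⬝ᵥ x) := by ring
    linarith only [hkey, hexp, r1, r2]

end MainProof
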